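/- The Charlier symmetric function relation: define the Charlier operator on symmetric functions (identified as functions on partitions via Frobenius–Schur functions FS_ν) by 𝔇^Ch FS_ν = -|ν| FS_ν + θ Σ_{□∈ν⁻} FS_{ν∖□}, and the Charlier symmetric function 𝔠_ν = Σ_{μ⊆ν} (-θ)^{|ν|-|μ|} (dim ν/μ)/(|ν|-|μ|)! · FS_μ. Then 𝔇^Ch 𝔠_ν = -|ν| 𝔠_ν for every partition ν. -/

import Mathlib

open scoped Classical

/-- A finite set of boxes `(row, column)` (0-indexed) is a Young diagram if it is a
lower set in the coordinatewise order. -/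
def IsYD (s : Finset (ℕ × ℕ)) : Prop :=
  ∀ p ∈ s, ∀ q : ℕ × ℕ, q.1 ≤ p.1 → q.2 ≤ p.2 → q ∈ s

/-- Young diagrams (= partitions). -/
def YD : Type := {s : Finset (ℕ × ℕ) // IsYD s}

/-- `skewDim n μ ν` counts the chains of diagrams from `ν` down to `μ` removing one
corner box at a time in `n` steps; for `n = |ν| - |μ|` this is the number `dim ν/μ`
of standard Young tableaux of skew shape `ν/μ`. -/
noncomputable def skewDim : ℕ → Finset (ℕ × ℕ) → Finset (ℕ × ℕ) → ℕ
  | 0, μ, ν => if μ = ν then 1 else 0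
  | n + 1, μ, ν =>
      ∑ p ∈ ν.filter (fun p => IsYD (ν.erase p) ∧ μ ⊆ ν.erase p),
        skewDim n μ (ν.erase p)

/-- `dim ν`, the number of standard Young tableaux of shape `ν`. -/
noncomputable def dimYD (s : Finset (ℕ × ℕ)) : ℕ := skewDim s.card ∅ s

/-- The Charlier operator `𝔇^Ch`, defined on the Frobenius–Schur basis
(`FS_ν` encoded as `Finsupp.single ν 1`) by
`𝔇^Ch FS_ν = -|ν| FS_ν + θ ∑_{□ ∈ ν⁻} FS_{ν∖□}`. -/
noncomputable def charlierOp (θ : ℂ) (F : YD →₀ ℂ) : YD →₀ ℂ :=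
  F.sum fun ν a =>
    a • ((-(ν.1.card : ℂ)) • Finsupp.single ν (1 : ℂ) +
      θ • ∑ p ∈ (ν.1.filter (fun p => IsYD (ν.1.erase p))).attach,
        (Finsupp.single (⟨ν.1.erase p.1, (Finset.mem_filter.mp p.2).2⟩ : YD) (1 : ℂ) :
          YD →₀ ℂ))

/-- The Charlier symmetric function
`𝔠_ν = ∑_{μ ⊆ ν} (-θ)^{|ν|-|μ|} (dim ν/μ)/(|ν|-|μ|)! FS_μ`. -/
noncomputable def charlierSF (θ : ℂ) (ν : YD) : YD →₀ ℂ :=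
  ∑ s ∈ (ν.1.powerset.filter IsYD).attach,
    ((-θ) ^ (ν.1.card - s.1.card) *
        (skewDim (ν.1.card - s.1.card) s.1 ν.1 : ℂ) /
          (Nat.factorial (ν.1.card - s.1.card) : ℂ)) •
      Finsupp.single (⟨s.1, (Finset.mem_filter.mp s.2).2⟩ : YD) (1 : ℂ)

/- ### Auxiliary lemmas -/

/-- The basic branching identity: removing `m+1` boxes from `ν` down to `lam` can be
counted according to the last box removed. -/
lemma skewDim_succ_bottom (m : ℕ) (lam : Finset (ℕ × ℕ)) (hl : IsYD lam) :
    ∀ nu : Finset (ℕ × ℕ), IsYD nu →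
    skewDim (m + 1) lam nu =
      ∑ q ∈ (nu \ lam).filter (fun q => IsYD (insert q lam)),
        skewDim m (insert q lam) nu := by
  induction m with
  | zero =>
    intro nu hn
    show (∑ p ∈ nu.filter (fun p => IsYD (nu.erase p) ∧ lam ⊆ nu.erase p),
        skewDim 0 lam (nu.erase p)) = _
    simp only [skewDim]
    rw [← Finset.sum_filter, ← Finset.sum_filter, Finset.sum_const, Finset.sum_const]
    congr 2
    ext p
    simp only [Finset.mem_filter, Finset.mem_sdiff]
    constructor
    · rintro ⟨⟨hp, hYD, hsub⟩, heq⟩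
      subst heq
      exact ⟨⟨⟨hp, Finset.notMem_erase p nu⟩, by rw [Finset.insert_erase hp]; exact hn⟩,
        Finset.insert_erase hp⟩
    · rintro ⟨⟨⟨hp, hpl⟩, hYD⟩, hins⟩
      have heq : nu.erase p = lam := by rw [← hins, Finset.erase_insert hpl]
      refine ⟨⟨hp, ?_, ?_⟩, heq.symm⟩
      · rw [heq]; exact hl
      · rw [heq]
  | succ m ih =>
    intro nu hn
    show (∑ p ∈ nu.filter (fun p => IsYD (nu.erase p) ∧ lam ⊆ nu.erase p),
        skewDim (m + 1) lam (nu.erase p)) = _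
    rw [Finset.sum_congr rfl (fun p hp => ih (nu.erase p) (Finset.mem_filter.mp hp).2.1)]
    have : ∀ q ∈ (nu \ lam).filter (fun q => IsYD (insert q lam)),
        skewDim (m + 1) (insert q lam) nu =
        ∑ p ∈ nu.filter (fun p => IsYD (nu.erase p) ∧ insert q lam ⊆ nu.erase p),
          skewDim m (insert q lam) (nu.erase p) := fun q _ => rfl
    rw [Finset.sum_congr rfl this]
    refine Finset.sum_comm' ?_
    intro p q
    simp only [Finset.mem_filter, Finset.mem_sdiff, Finset.mem_erase, Finset.insert_subset_iff]
    constructor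
    · intro h; tauto
    · intro h; tauto

/-- The coefficient of `FS_s` in the Charlier symmetric function `𝔠_ν`. -/
noncomputable def charCoeff (θ : ℂ) (nu s : Finset (ℕ × ℕ)) : ℂ :=
  (-θ) ^ (nu.card - s.card) * (skewDim (nu.card - s.card) s nu : ℂ) /
    (Nat.factorial (nu.card - s.card) : ℂ)

/-- The scalar (coefficient-by-coefficient) form of the eigenvalue identity. -/
lemma scalar_key (θ : ℂ) (nu L : Finset (ℕ × ℕ)) (hn : IsYD nu) (hL : IsYD L) :
    ∑ s ∈ nu.powerset.filter IsYD,
      charCoeff θ nu s * ((-(s.card : ℂ)) * (if s = L then 1 else 0)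
        + θ * ∑ p ∈ s.filter (fun p => IsYD (s.erase p)), (if s.erase p = L then 1 else 0))
    = -(nu.card : ℂ) *
        ∑ s ∈ nu.powerset.filter IsYD, charCoeff θ nu s * (if s = L then 1 else 0) := by
  set P := nu.powerset.filter IsYD with hP
  by_cases hsub : L ⊆ nu
  · -- main case
    set Q := (nu \ L).filter (fun q => IsYD (insert q L)) with hQ
    have hLP : L ∈ P := Finset.mem_filter.mpr ⟨Finset.mem_powerset.mpr hsub, hL⟩
    have inner_eq : ∀ s ∈ P,
        (∑ p ∈ s.filter (fun p => IsYD (s.erase p)), if s.erase p = L then (1:ℂ) else 0)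
          = ∑ q ∈ Q, if insert q L = s then (1:ℂ) else 0 := by
      intro s hs
      obtain ⟨hsnu, hsYD⟩ := Finset.mem_filter.mp hs
      rw [Finset.mem_powerset] at hsnu
      rw [← Finset.sum_filter, ← Finset.sum_filter, Finset.sum_const, Finset.sum_const]
      congr 2
      ext r
      simp only [Finset.mem_filter, Finset.mem_sdiff, hQ]
      constructor
      · rintro ⟨⟨hr, hYD⟩, heq⟩
        have hrl : r ∉ L := heq ▸ Finset.notMem_erase r s
        have hins : insert r L = s := by rw [← heq, Finset.insert_erase hr]
        exact ⟨⟨⟨hsnu hr, hrl⟩, by rw [hins]; exact hsYD⟩, hins⟩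
      · rintro ⟨⟨⟨hr, hrl⟩, hYD⟩, hins⟩
        have heq : s.erase r = L := by rw [← hins, Finset.erase_insert hrl]
        refine ⟨⟨?_, ?_⟩, heq⟩
        · rw [← hins]; exact Finset.mem_insert_self r L
        · rw [heq]; exact hL
    rw [Finset.sum_congr rfl (fun s hs => by rw [inner_eq s hs])]
    simp only [mul_add, Finset.sum_add_distrib]
    have e1 : ∑ s ∈ P, charCoeff θ nu s * ((-(s.card : ℂ)) * (if s = L then 1 else 0))
        = -(L.card : ℂ) * charCoeff θ nu L := by
      rw [Finset.sum_congr rfl (fun s _ => by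
        split_ifs <;> ring :
          ∀ s ∈ P, charCoeff θ nu s * ((-(s.card : ℂ)) * (if s = L then 1 else 0))
            = if s = L then charCoeff θ nu s * (-(s.card : ℂ)) else 0)]
      rw [Finset.sum_ite_eq' P L (fun s => charCoeff θ nu s * (-(s.card : ℂ))), if_pos hLP]
      ring
    have e2 : ∑ s ∈ P, charCoeff θ nu s * (θ * ∑ q ∈ Q, if insert q L = s then (1:ℂ) else 0)
        = θ * ∑ q ∈ Q, charCoeff θ nu (insert q L) := by
      rw [Finset.sum_congr rfl (fun s _ => by
        rw [Finset.mul_sum, Finset.mul_sum] :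
          ∀ s ∈ P, charCoeff θ nu s * (θ * ∑ q ∈ Q, if insert q L = s then (1:ℂ) else 0)
            = ∑ q ∈ Q, charCoeff θ nu s * (θ * if insert q L = s then (1:ℂ) else 0))]
      rw [Finset.sum_comm, Finset.mul_sum]
      refine Finset.sum_congr rfl fun q hq => ?_
      have hqQ := Finset.mem_filter.mp hq
      have hqnu := (Finset.mem_sdiff.mp hqQ.1).1
      have hmem : insert q L ∈ P := Finset.mem_filter.mpr
        ⟨Finset.mem_powerset.mpr (Finset.insert_subset hqnu hsub), hqQ.2⟩
      rw [Finset.sum_congr rfl (fun s _ => by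
        split_ifs <;> ring :
          ∀ s ∈ P, charCoeff θ nu s * (θ * if insert q L = s then (1:ℂ) else 0)
            = if insert q L = s then charCoeff θ nu s * θ else 0)]
      rw [Finset.sum_ite_eq P (insert q L) (fun s => charCoeff θ nu s * θ), if_pos hmem]
      ring
    rw [e1, e2, Finset.sum_congr rfl (fun s _ => by
        split_ifs <;> ring :
          ∀ s ∈ P, charCoeff θ nu s * (if s = L then 1 else 0)
            = if s = L then charCoeff θ nu s else 0),
      Finset.sum_ite_eq' P L (fun s => charCoeff θ nu s), if_pos hLP]
    -- now the numeric identity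
    have hkn : L.card ≤ nu.card := Finset.card_le_card hsub
    rcases eq_or_lt_of_le hkn with heq | hlt
    · have hLnu : L = nu := Finset.eq_of_subset_of_card_le hsub (le_of_eq heq.symm)
      subst hLnu
      rw [hQ]
      simp
    · obtain ⟨m', hm'⟩ : ∃ m', nu.card - L.card = m' + 1 :=
        ⟨nu.card - L.card - 1, by omega⟩
      have hsum : ∑ q ∈ Q, charCoeff θ nu (insert q L)
          = (-θ) ^ m' / (Nat.factorial m' : ℂ) *
              (skewDim (nu.card - L.card) L nu : ℂ) := by
        have : ∀ q ∈ Q, charCoeff θ nu (insert q L)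
            = (-θ) ^ m' / (Nat.factorial m' : ℂ) * (skewDim m' (insert q L) nu : ℂ) := by
          intro q hq
          have hql : q ∉ L := (Finset.mem_sdiff.mp (Finset.mem_filter.mp hq).1).2
          have hc : (insert q L).card = L.card + 1 := Finset.card_insert_of_notMem hql
          have hc2 : nu.card - (insert q L).card = m' := by omega
          rw [charCoeff, hc2]
          ring
        rw [Finset.sum_congr rfl this, ← Finset.mul_sum]
        congr 1
        rw [← Nat.cast_sum]
        congr 1
        rw [hm', ← skewDim_succ_bottom m' L hL nu hn]
      rw [hsum, charCoeff, hm']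
      have hfac : (Nat.factorial (m' + 1) : ℂ) = (m' + 1) * (Nat.factorial m' : ℂ) := by
        rw [Nat.factorial_succ]; push_cast; ring
      have hnc : (nu.card : ℂ) = (L.card : ℂ) + (m' : ℂ) + 1 := by
        have : nu.card = L.card + m' + 1 := by omega
        rw [this]; push_cast; ring
      rw [hfac, hnc, pow_succ]
      have h1 : (Nat.factorial m' : ℂ) ≠ 0 := Nat.cast_ne_zero.mpr (Nat.factorial_ne_zero m')
      have h2 : ((m' : ℂ) + 1) ≠ 0 := by
        have := Nat.cast_ne_zero (R := ℂ).mpr (Nat.succ_ne_zero m')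
        push_cast at this
        exact this
      field_simp
      ring
  · -- degenerate case: L is not contained in nu, everything vanishes
    have z1 : ∀ s ∈ P, charCoeff θ nu s * (if s = L then (1:ℂ) else 0) = 0 := by
      intro s hs
      have : s ≠ L := by
        rintro rfl
        exact hsub (Finset.mem_powerset.mp (Finset.mem_filter.mp hs).1)
      rw [if_neg this, mul_zero]
    have z2 : ∀ s ∈ P, charCoeff θ nu s * ((-(s.card : ℂ)) * (if s = L then 1 else 0)
        + θ * ∑ p ∈ s.filter (fun p => IsYD (s.erase p)), (if s.erase p = L then 1 else 0))
          = 0 := by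
      intro s hs
      have hsnu : s ⊆ nu := Finset.mem_powerset.mp (Finset.mem_filter.mp hs).1
      have hz : (∑ p ∈ s.filter (fun p => IsYD (s.erase p)),
          (if s.erase p = L then (1:ℂ) else 0)) = 0 := by
        refine Finset.sum_eq_zero fun p hp => ?_
        have : s.erase p ≠ L := by
          rintro heq
          exact hsub (heq ▸ (Finset.erase_subset p s).trans hsnu)
        rw [if_neg this]
      have hne : s ≠ L := by
        rintro rfl
        exact hsub hsnu
      rw [hz, if_neg hne]
      ring
    rw [Finset.sum_eq_zero z2, Finset.sum_eq_zero z1, mul_zero]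

lemma single_apply_mk (a L : Finset (ℕ × ℕ)) (ha : IsYD a) (hL : IsYD L) :
    (Finsupp.single (α := YD) ⟨a, ha⟩ (1 : ℂ)) ⟨L, hL⟩ = if a = L then 1 else 0 := by
  erw [Finsupp.single_apply]
  by_cases h : a = L
  · subst h
    rw [if_pos rfl]; exact if_pos rfl
  · rw [if_neg h]; exact if_neg (fun he => h (congrArg (fun (x : YD) => x.1) he))

lemma attach_single_apply (s L : Finset (ℕ × ℕ)) (hL : IsYD L) :
    ((∑ p ∈ (s.filter (fun p => IsYD (s.erase p))).attach,
        (Finsupp.single (⟨s.erase p.1, (Finset.mem_filter.mp p.2).2⟩ : YD) (1 : ℂ) :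
          YD →₀ ℂ)) : YD →₀ ℂ) ⟨L, hL⟩
      = ∑ p ∈ s.filter (fun p => IsYD (s.erase p)), (if s.erase p = L then (1:ℂ) else 0) := by
  erw [Finset.sum_apply']
  rw [← Finset.sum_attach (s.filter (fun p => IsYD (s.erase p)))
    (fun p => if s.erase p = L then (1:ℂ) else 0)]
  refine Finset.sum_congr rfl fun p _ => ?_
  exact single_apply_mk _ _ _ hL

/-- The Charlier symmetric functions are eigenvectors of the Charlier operator:
`𝔇^Ch 𝔠_ν = -|ν| 𝔠_ν` for every partition `ν`. -/
theorem charlierOp_charlierSF (θ : ℂ) (ν : YD) :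
    charlierOp θ (charlierSF θ ν) = (-(ν.1.card : ℂ)) • charlierSF θ ν := by
  rw [charlierOp, charlierSF]
  erw [← Finsupp.sum_finsetSum_index (fun i => by simp) (fun i x y => add_smul x y _)]
  rw [Finset.sum_congr rfl (fun s _ => by
    erw [Finsupp.smul_single, smul_eq_mul, mul_one,
      Finsupp.sum_single_index (by simp)])]
  ext l
  obtain ⟨L, hL⟩ := l
  erw [Finsupp.smul_apply, Finset.sum_apply', Finset.sum_apply']
  have lhs_eq : ∀ s ∈ (ν.1.powerset.filter IsYD).attach,
      ((((-θ) ^ (ν.1.card - s.1.card) *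
          (skewDim (ν.1.card - s.1.card) s.1 ν.1 : ℂ) /
            (Nat.factorial (ν.1.card - s.1.card) : ℂ)) •
        ((-(s.1.card : ℂ)) • Finsupp.single (α := YD) ⟨s.1, (Finset.mem_filter.mp s.2).2⟩ (1 : ℂ) +
          θ • ∑ p ∈ (s.1.filter (fun p => IsYD (s.1.erase p))).attach,
            (Finsupp.single (⟨s.1.erase p.1, (Finset.mem_filter.mp p.2).2⟩ : YD) (1 : ℂ) :
              YD →₀ ℂ)) : YD →₀ ℂ)) ⟨L, hL⟩
      = charCoeff θ ν.1 s.1 * ((-(s.1.card : ℂ)) * (if s.1 = L then 1 else 0)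
          + θ * ∑ p ∈ s.1.filter (fun p => IsYD (s.1.erase p)),
              (if s.1.erase p = L then (1:ℂ) else 0)) := by
    intro s _
    erw [Finsupp.smul_apply, Finsupp.add_apply, Finsupp.smul_apply, Finsupp.smul_apply,
      single_apply_mk _ _ _ hL, attach_single_apply _ _ hL, smul_eq_mul, smul_eq_mul,
      smul_eq_mul, charCoeff]
  have rhs_eq : ∀ s ∈ (ν.1.powerset.filter IsYD).attach,
      ((((-θ) ^ (ν.1.card - s.1.card) *
          (skewDim (ν.1.card - s.1.card) s.1 ν.1 : ℂ) /
            (Nat.factorial (ν.1.card - s.1.card) : ℂ)) •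
        Finsupp.single (α := YD) ⟨s.1, (Finset.mem_filter.mp s.2).2⟩ (1 : ℂ) : YD →₀ ℂ)) ⟨L, hL⟩
      = charCoeff θ ν.1 s.1 * (if s.1 = L then 1 else 0) := by
    intro s _
    erw [Finsupp.smul_apply, single_apply_mk _ _ _ hL, smul_eq_mul, charCoeff]
  erw [Finset.sum_congr rfl lhs_eq, Finset.sum_congr rfl rhs_eq]
  rw [Finset.sum_attach (ν.1.powerset.filter IsYD)
    (fun s => charCoeff θ ν.1 s * ((-(s.card : ℂ)) * (if s = L then 1 else 0)
      + θ * ∑ p ∈ s.filter (fun p => IsYD (s.erase p)), (if s.erase p = L then (1:ℂ) else 0)))]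
  rw [Finset.sum_attach (ν.1.powerset.filter IsYD)
    (fun s => charCoeff θ ν.1 s * (if s = L then (1:ℂ) else 0))]
  rw [smul_eq_mul]
  exact scalar_key θ ν.1 L ν.2 hL
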